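/- The kernel of the derivation D = z·∂/∂y + y·∂/∂x on C[x,y,z] equals the polynomial subalgebra C[z, p], where p = xz − (1/2)y². Moreover, z and p are algebraically independent over C. -/

import Mathlib

open MvPolynomial

noncomputable section

/-- The polynomial ring ℂ[x,y,z], with x = X 0, y = X 1, z = X 2. -/
abbrev R3 : Type := MvPolynomial (Fin 3) ℂ

/-- The derivation D = z·∂/∂y + y·∂/∂x, i.e. D x = y, D y = z, D z = 0. -/
def D : Derivation ℂ R3 R3 := mkDerivation ℂ ![X 1, X 2, 0]

/-- p = xz - (1/2)y² -/
def p : R3 := X 0 * X 2 - C (1/2) * X 1 ^ 2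

/-- The exponential automorphism exp(qD) of ℂ³ (for q ∈ ker D), given by its
closed formula: since D q = 0, (qD)x = qy, (qD)²x = q²z, (qD)³x = 0, so
exp(qD) = (x + qy + q²z/2, y + qz, z). -/
def expMap (q : R3) : (Fin 3 → ℂ) → (Fin 3 → ℂ) :=
  fun a => ![a 0 + eval a q * a 1 + eval a q ^ 2 * a 2 / 2,
             a 1 + eval a q * a 2, a 2]

/-- A map ℂ³ → ℂ³ given coordinatewise by polynomials. -/
def IsPolyMap (F : (Fin 3 → ℂ) → (Fin 3 → ℂ)) : Prop :=
  ∃ f : Fin 3 → R3, ∀ a i, F a i = eval a (f i)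

/-- A polynomial automorphism of ℂ³: a polynomial map with a polynomial inverse. -/
def IsPolyAut (F : (Fin 3 → ℂ) → (Fin 3 → ℂ)) : Prop :=
  IsPolyMap F ∧ ∃ G, IsPolyMap G ∧ F ∘ G = id ∧ G ∘ F = id

/-- h' = exp(D) : (x,y,z) ↦ (x + y + z/2, y + z, z). -/
def h'map : (Fin 3 → ℂ) → (Fin 3 → ℂ) :=
  fun a => ![a 0 + a 1 + a 2 / 2, a 1 + a 2, a 2]

namespace Stmt2

abbrev R2 : Type := MvPolynomial (Fin 2) ℂ
abbrev S2 : Type := Polynomial R2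

def E : R3 ≃ₐ[ℂ] S2 := MvPolynomial.finSuccEquiv ℂ 2

def dl : Derivation ℂ R2 R2 := mkDerivation ℂ ![X 1, 0]

def Dc : Derivation ℂ S2 S2 := PolynomialModule.equivPolynomialSelf.compDer dl.mapCoeffs

set_option synthInstance.maxHeartbeats 1000000 in
def Dd : Derivation ℂ S2 S2 :=
  (Polynomial.C (X 0 : R2) : S2) • ((Polynomial.derivative' (R := R2)).restrictScalars ℂ : Derivation ℂ S2 S2) + Dc

lemma coeff_Dc (q : S2) (n : ℕ) : (Dc q).coeff n = dl (q.coeff n) := rfl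

lemma coeff_Dd (q : S2) (n : ℕ) :
    (Dd q).coeff n = X 0 * (q.coeff (n+1) * ((n : R2)+1)) + dl (q.coeff n) := by
  simp [Dd, coeff_Dc, Polynomial.coeff_smul, smul_eq_mul, Polynomial.coeff_C_mul,
    Derivation.restrictScalars_apply, Polynomial.derivative', Polynomial.coeff_derivative]

end Stmt2

namespace Stmt2

lemma E_X0 : E (X 0) = Polynomial.X := finSuccEquiv_X_zero
lemma E_X1 : E (X 1) = Polynomial.C (X 0) := finSuccEquiv_X_succ (j := 0)
lemma E_X2 : E (X 2) = Polynomial.C (X 1) := finSuccEquiv_X_succ (j := 1)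

lemma dl_X0 : dl (X 0) = X 1 := by simp [dl, mkDerivation_X]
lemma dl_X1 : dl (X 1) = 0 := by simp [dl, mkDerivation_X]
lemma Dc_apply (q : S2) : Dc q = PolynomialModule.equivPolynomialSelf (dl.mapCoeffs q) := rfl

lemma Dc_X : Dc (Polynomial.X : S2) = 0 := by
  rw [Dc_apply, Derivation.mapCoeffs_X, map_zero]

lemma Dc_C (a : R2) : Dc (Polynomial.C a : S2) = Polynomial.C (dl a) := by
  rw [Dc_apply, Derivation.mapCoeffs_C, PolynomialModule.equivPolynomialSelf_apply_eq,
    PolynomialModule.equivPolynomial_single, Polynomial.monomial_zero_left]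

lemma Dd_X : Dd (Polynomial.X : S2) = Polynomial.C (X 0) := by
  simp [Dd, Dc_X, Derivation.restrictScalars_apply, Polynomial.derivative', smul_eq_mul]

lemma Dd_C (a : R2) : Dd (Polynomial.C a : S2) = Polynomial.C (dl a) := by
  simp [Dd, Dc_C, Derivation.restrictScalars_apply, Polynomial.derivative', smul_eq_mul]

/-- the derivation `f ↦ E.symm (Dd (E f))` on `R3`. -/
def M : Derivation ℂ R3 R3 where
  toLinearMap := E.symm.toLinearMap ∘ₗ Dd.toLinearMap ∘ₗ E.toLinearMap
  map_one_eq_zero' := by simp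
  leibniz' a b := by
    show E.symm (Dd (E (a * b))) = a • E.symm (Dd (E b)) + b • E.symm (Dd (E a))
    rw [map_mul, Dd.leibniz, map_add, smul_eq_mul, smul_eq_mul, map_mul, map_mul,
      E.symm_apply_apply, E.symm_apply_apply, smul_eq_mul, smul_eq_mul]

lemma M_apply (f : R3) : M f = E.symm (Dd (E f)) := rfl

lemma D_eq (D : Derivation ℂ R3 R3)
    (hx : D (X 0) = X 1) (hy : D (X 1) = X 2) (hz : D (X 2) = 0) : D = M := by
  apply derivation_ext
  intro i
  fin_cases i
  · show D (X 0) = M (X 0)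
    rw [hx, M_apply, E_X0, Dd_X, ← E_X1, E.symm_apply_apply]
  · show D (X 1) = M (X 1)
    rw [hy, M_apply, E_X1, Dd_C, dl_X0, ← E_X2, E.symm_apply_apply]
  · show D (X 2) = M (X 2)
    rw [hz, M_apply, E_X2, Dd_C, dl_X1, Polynomial.C_0, ← map_zero E, E.symm_apply_apply]

lemma E_D (D : Derivation ℂ R3 R3)
    (hx : D (X 0) = X 1) (hy : D (X 1) = X 2) (hz : D (X 2) = 0) (f : R3) :
    E (D f) = Dd (E f) := by
  rw [D_eq D hx hy hz, M_apply, E.apply_symm_apply]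

def A3 : Subalgebra ℂ R3 := Algebra.adjoin ℂ ({X 2, p} : Set R3)

lemma X2_mem : (X 2 : R3) ∈ A3 := Algebra.subset_adjoin (by simp)
lemma p_mem : p ∈ A3 := Algebra.subset_adjoin (by simp)

lemma D_p (D : Derivation ℂ R3 R3)
    (hx : D (X 0) = X 1) (hy : D (X 1) = X 2) (hz : D (X 2) = 0) : D p = 0 := by
  have h2 : D (C (1/2 : ℂ) : R3) = 0 := by
    rw [← MvPolynomial.algebraMap_eq]; exact D.map_algebraMap _
  have h3 : (C (1/2 : ℂ) : R3) * 2 = 1 := by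
    rw [show ((2 : R3)) = C (2 : ℂ) from (map_ofNat C 2).symm, ← C_mul]; norm_num
  rw [p, map_sub, Derivation.leibniz, Derivation.leibniz, Derivation.leibniz_pow, hx, hy, hz, h2]
  simp only [smul_eq_mul, nsmul_eq_mul]
  linear_combination (-(X 2 * X 1) : R3) * h3

lemma D_zero_of_mem (D : Derivation ℂ R3 R3)
    (hx : D (X 0) = X 1) (hy : D (X 1) = X 2) (hz : D (X 2) = 0)
    {f : R3} (hf : f ∈ A3) : D f = 0 := by
  induction hf using Algebra.adjoin_induction with
  | mem x h =>
    rcases h with h | h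
    · rw [h, hz]
    · rw [h]; exact D_p D hx hy hz
  | algebraMap r => exact D.map_algebraMap r
  | add x y hx' hy' ihx ihy => rw [map_add, ihx, ihy, add_zero]
  | mul x y hx' hy' ihx ihy => rw [Derivation.leibniz, ihx, ihy, smul_zero, smul_zero, add_zero]

/-- the polynomial -(1/2) T^2 -/
def f0 : Polynomial ℂ := -(Polynomial.C (1/2 : ℂ) * Polynomial.X ^ 2)

lemma f0_natDegree : f0.natDegree = 2 := by
  rw [f0, Polynomial.natDegree_neg, Polynomial.natDegree_C_mul_X_pow]
  norm_num

lemma f0_trans : Transcendental ℂ f0 := by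
  apply Polynomial.transcendental
  · rw [f0_natDegree]; norm_num
  · apply mem_nonZeroDivisors_of_ne_zero
    rw [f0, Polynomial.leadingCoeff_neg, Polynomial.leadingCoeff_C_mul_X_pow]
    norm_num

lemma w_trans {n : ℕ} (i : Fin n) :
    Transcendental ℂ (-(C (1/2 : ℂ) * (X i : MvPolynomial (Fin n) ℂ) ^ 2)) := by
  have := MvPolynomial.transcendental_polynomial_aeval_X ℂ i (f := f0) f0_trans
  convert this using 1
  simp [f0, MvPolynomial.algebraMap_eq]

/-- Representation of the subalgebra via `ℂ[X][X] → R3`, outer `X ↦ z`, inner `X ↦ p`. -/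
def Ψ : Polynomial (Polynomial ℂ) →ₐ[ℂ] R3 :=
  Polynomial.aevalTower (Polynomial.aeval p) (X 2)

lemma Ψ_C (c : Polynomial ℂ) : Ψ (Polynomial.C c) = Polynomial.aeval p c :=
  Polynomial.aevalTower_C _ _ _

lemma Ψ_X : Ψ Polynomial.X = X 2 := Polynomial.aevalTower_X _ _

lemma Ψ_range : Ψ.range = A3 := by
  apply le_antisymm
  · rintro _ ⟨Q, rfl⟩
    induction Q using Polynomial.induction_on' with
    | add q r hq hr => rw [map_add]; exact add_mem hq hr
    | monomial n c =>
      rw [← Polynomial.C_mul_X_pow_eq_monomial, map_mul, map_pow]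
      show (Ψ (Polynomial.C c)) * (Ψ Polynomial.X) ^ n ∈ A3
      rw [Ψ_C, Ψ_X]
      exact mul_mem
        (Algebra.adjoin_mono (Set.singleton_subset_iff.2 (by simp))
          (Polynomial.aeval_mem_adjoin_singleton ℂ p))
        (pow_mem X2_mem n)
  · apply Algebra.adjoin_le
    rintro x (rfl | rfl)
    · exact ⟨Polynomial.X, Ψ_X⟩
    · exact ⟨Polynomial.C Polynomial.X, by
        show Ψ (Polynomial.C Polynomial.X) = p
        rw [Ψ_C, Polynomial.aeval_X]⟩

lemma cancel_z {f : R3} (hf : X 2 * f ∈ A3) : f ∈ A3 := by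
  rw [← Ψ_range] at hf ⊢
  rw [AlgHom.mem_range] at hf ⊢
  obtain ⟨Q, hQ⟩ := hf
  have hdec : Polynomial.X * Q.divX + Polynomial.C (Q.coeff 0) = Q := Polynomial.X_mul_divX_add Q
  -- apply the evaluation z ↦ 0
  set ev0 : R3 →ₐ[ℂ] R3 := aeval ![X 0, X 1, 0] with hev0
  have hev0p : ev0 p = -(C (1/2 : ℂ) * (X 1 : R3) ^ 2) := by
    simp [hev0, p]
  have hkey : Polynomial.aeval p (Q.coeff 0) = X 2 * (f - Ψ Q.divX) := by
    have hQ' : X 2 * Ψ Q.divX + Polynomial.aeval p (Q.coeff 0) = X 2 * f := by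
      rw [← hQ]
      conv_rhs => rw [← hdec]
      rw [map_add, map_mul, Ψ_X, Ψ_C]
    linear_combination hQ'
  have h0 : Polynomial.aeval (-(C (1/2 : ℂ) * (X 1 : R3) ^ 2)) (Q.coeff 0) = 0 := by
    have := congrArg ev0 hkey
    rw [← Polynomial.aeval_algHom_apply, hev0p] at this
    rw [this, map_mul]
    simp [hev0]
  have hc0 : Q.coeff 0 = 0 := by
    have := (transcendental_iff (R := ℂ)).mp (w_trans (1 : Fin 3))
    exact this _ h0
  have : X 2 * f = X 2 * Ψ Q.divX := by
    conv_lhs => rw [← hQ]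
    conv_lhs => rw [← hdec]
    rw [hc0, Polynomial.C_0, add_zero, map_mul, Ψ_X]
  exact ⟨Q.divX, (mul_left_cancel₀ (X_ne_zero 2) this).symm⟩

lemma cancel_z_pow {f : R3} (k : ℕ) (hf : X 2 ^ k * f ∈ A3) : f ∈ A3 := by
  induction k with
  | zero => simpa using hf
  | succ k ih =>
    apply ih
    apply cancel_z
    have h : X 2 * (X 2 ^ k * f) = X 2 ^ (k+1) * f := by ring
    rw [h]
    exact hf

lemma coeff_pderiv {σ : Type*} [DecidableEq σ] (i : σ) (m : σ →₀ ℕ) (f : MvPolynomial σ ℂ) :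
    coeff m (pderiv i f) = ((m i : ℂ) + 1) * coeff (m + Finsupp.single i 1) f := by
  induction f using MvPolynomial.induction_on' with
  | add q r hq hr => rw [map_add, coeff_add, coeff_add, hq, hr]; ring
  | monomial s a =>
    rw [pderiv_monomial, coeff_monomial, coeff_monomial]
    by_cases h : s = m + Finsupp.single i 1
    · have h1 : s - Finsupp.single i 1 = m := by
        rw [h]; exact add_tsub_cancel_right m (Finsupp.single i 1)
      have h2 : (s i : ℂ) = m i + 1 := by
        rw [h]; push_cast [Finsupp.add_apply, Finsupp.single_eq_same]; ring
      rw [if_pos h1, if_pos h, h2]; ring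
    · rw [if_neg h]
      by_cases h3 : s - Finsupp.single i 1 = m
      · have h4 : s i = 0 := by
          by_contra h5
          apply h
          rw [← h3, tsub_add_cancel_of_le]
          rwa [Finsupp.single_le_iff, Nat.one_le_iff_ne_zero]
        rw [if_pos h3, h4]
        push_cast; ring
      · rw [if_neg h3, mul_zero]

lemma poly_in_z_of_pderiv {a : R2} (h : pderiv 0 a = 0) :
    ∃ c : Polynomial ℂ, Polynomial.aeval (X 1 : R2) c = a := by
  have hco : ∀ m : Fin 2 →₀ ℕ, m 0 ≠ 0 → coeff m a = 0 := by
    intro m hm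
    set m' : Fin 2 →₀ ℕ := m - Finsupp.single 0 1 with hm'
    have hmm : m' + Finsupp.single 0 1 = m := by
      rw [hm', tsub_add_cancel_of_le]
      rwa [Finsupp.single_le_iff, Nat.one_le_iff_ne_zero]
    have := coeff_pderiv 0 m' a
    rw [h, coeff_zero, hmm] at this
    have hne : ((m' 0 : ℂ) + 1) ≠ 0 := Nat.cast_add_one_ne_zero (m' 0)
    exact ((mul_eq_zero.mp this.symm).resolve_left hne)
  have hsup : a ∈ supported ℂ ({1} : Set (Fin 2)) := by
    rw [mem_supported]
    intro i hi
    rw [Finset.mem_coe, mem_vars] at hi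
    obtain ⟨m, hm, him⟩ := hi
    fin_cases i
    · exfalso
      rw [mem_support_iff] at hm
      exact hm (hco m (Finsupp.mem_support_iff.mp him))
    · exact rfl
  rw [supported_eq_adjoin_X, Set.image_singleton, Algebra.adjoin_singleton_eq_range_aeval,
    AlgHom.mem_range] at hsup
  exact hsup

lemma dl_eq (a : R2) : dl a = X 1 * pderiv 0 a := by
  have : dl = (X 1 : R2) • (pderiv 0 : Derivation ℂ R2 R2) := by
    apply derivation_ext
    intro i
    fin_cases i
    · rw [Derivation.smul_apply]
      show dl (X 0) = X 1 • pderiv 0 (X 0)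
      rw [dl_X0, pderiv_X_self, smul_eq_mul, mul_one]
    · rw [Derivation.smul_apply]
      show dl (X 1) = X 1 • pderiv 0 (X 1)
      rw [dl_X1, pderiv_X_of_ne (by decide), smul_zero]
  rw [this, Derivation.smul_apply, smul_eq_mul]

lemma E_p : E p = Polynomial.C (X 1 : R2) * Polynomial.X
    - Polynomial.C (MvPolynomial.C (1/2 : ℂ) * (X 0 : R2) ^ 2) := by
  have hC : E (C (1/2 : ℂ) : R3) = Polynomial.C (MvPolynomial.C (1/2 : ℂ)) := by
    rw [← MvPolynomial.algebraMap_eq, AlgEquiv.commutes]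
    rfl
  rw [p, map_sub, map_mul, map_mul, map_pow, E_X0, E_X1, E_X2, hC]
  rw [← Polynomial.C_pow, ← Polynomial.C_mul]
  ring

lemma Ep_natDegree : (E p).natDegree = 1 := by
  rw [E_p, sub_eq_add_neg, ← Polynomial.C_neg]
  exact Polynomial.natDegree_linear (X_ne_zero 1)

lemma Ep_leadingCoeff : (E p).leadingCoeff = X 1 := by
  rw [E_p, sub_eq_add_neg, ← Polynomial.C_neg]
  exact Polynomial.leadingCoeff_linear (X_ne_zero 1)

lemma Ep_pow_coeff (d : ℕ) : ((E p) ^ d).coeff d = (X 1 : R2) ^ d := by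
  have hne : (E p).leadingCoeff ^ d ≠ 0 := by
    rw [Ep_leadingCoeff]; exact pow_ne_zero d (X_ne_zero 1)
  have hdeg : ((E p) ^ d).natDegree = d := by
    rw [Polynomial.natDegree_pow' hne, Ep_natDegree, mul_one]
  have := Polynomial.leadingCoeff_pow' hne
  rw [Polynomial.leadingCoeff, hdeg] at this
  rw [this, Ep_leadingCoeff]

lemma Ep_pow_natDegree_le (d : ℕ) : ((E p) ^ d).natDegree ≤ d := by
  have := Polynomial.natDegree_pow_le (p := E p) (n := d)
  rwa [Ep_natDegree, mul_one] at this

lemma main_ind (D : Derivation ℂ R3 R3)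
    (hx : D (X 0) = X 1) (hy : D (X 1) = X 2) (hz : D (X 2) = 0) :
    ∀ d : ℕ, ∀ f : R3, (E f).natDegree = d → D f = 0 → ∃ k, X 2 ^ k * f ∈ A3 := by
  intro d
  induction d using Nat.strong_induction_on with
  | _ d IH =>
    intro f hdeg hDf
    set q := E f with hq
    set a := q.coeff d with ha
    have hDd : Dd q = 0 := by rw [← E_D D hx hy hz, hDf, map_zero]
    have hda : dl a = 0 := by
      have hco := coeff_Dd q d
      rw [hDd, Polynomial.coeff_zero] at hco
      have hc1 : q.coeff (d+1) = 0 := by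
        apply Polynomial.coeff_eq_zero_of_natDegree_lt
        rw [hdeg]; omega
      rw [hc1] at hco
      simpa using hco.symm
    have hpd : pderiv 0 a = 0 := by
      rw [dl_eq] at hda
      exact (mul_eq_zero.mp hda).resolve_left (X_ne_zero 1)
    obtain ⟨c, hc⟩ := poly_in_z_of_pderiv hpd
    set ahat : R3 := Polynomial.aeval (X 2 : R3) c with hahat
    have hEahat : E ahat = Polynomial.C a := by
      rw [hahat]
      calc E (Polynomial.aeval (X 2 : R3) c)
          = Polynomial.aeval (E (X 2)) c := (Polynomial.aeval_algHom_apply E (X 2) c).symm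
        _ = Polynomial.aeval (Polynomial.CAlgHom (R := ℂ) (X 1 : R2)) c := by rw [E_X2]; rfl
        _ = Polynomial.CAlgHom (R := ℂ) (Polynomial.aeval (X 1 : R2) c) :=
            Polynomial.aeval_algHom_apply _ _ _
        _ = Polynomial.C a := by rw [hc]; rfl
    have hahat_mem : ahat ∈ A3 := by
      rw [hahat]
      exact Algebra.adjoin_mono (Set.singleton_subset_iff.2 (by simp))
        (Polynomial.aeval_mem_adjoin_singleton ℂ (X 2))
    set g : R3 := X 2 ^ d * f - ahat * p ^ d with hg
    have hgmem_aux : ahat * p ^ d ∈ A3 := mul_mem hahat_mem (pow_mem p_mem d)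
    have hDg : D g = 0 := by
      rw [hg, map_sub, Derivation.leibniz, hDf, D_zero_of_mem D hx hy hz (pow_mem X2_mem d),
        D_zero_of_mem D hx hy hz hgmem_aux]
      simp
    have hEg : E g = Polynomial.C ((X 1 : R2) ^ d) * q - Polynomial.C a * (E p) ^ d := by
      rw [hg, map_sub, map_mul, map_mul, map_pow, map_pow, E_X2, hEahat, Polynomial.C_pow, hq]
    have hcoeff : (E g).coeff d = 0 := by
      rw [hEg, Polynomial.coeff_sub, Polynomial.coeff_C_mul, Polynomial.coeff_C_mul,
        Ep_pow_coeff, ← ha]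
      ring
    have hdegg : (E g).natDegree ≤ d := by
      rw [hEg]
      apply le_trans (Polynomial.natDegree_sub_le _ _)
      apply max_le
      · apply le_trans Polynomial.natDegree_mul_le
        rw [Polynomial.natDegree_C, hdeg]; omega
      · apply le_trans Polynomial.natDegree_mul_le
        rw [Polynomial.natDegree_C]
        have := Ep_pow_natDegree_le d; omega
    by_cases hg0 : g = 0
    · refine ⟨d, ?_⟩
      have h0 : X 2 ^ d * f - ahat * p ^ d = 0 := by rw [← hg]; exact hg0
      rw [sub_eq_zero.mp h0]
      exact hgmem_aux
    · have hEg0 : E g ≠ 0 := fun h => hg0 ((EmbeddingLike.map_eq_zero_iff).mp h)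
      have hne : (E g).natDegree ≠ d := by
        intro hdg
        apply hEg0
        rw [← Polynomial.leadingCoeff_eq_zero, Polynomial.leadingCoeff, hdg, hcoeff]
      obtain ⟨k, hk⟩ := IH _ (lt_of_le_of_ne hdegg hne) g rfl hDg
      refine ⟨k + d, ?_⟩
      have heq : X 2 ^ (k + d) * f = X 2 ^ k * g + X 2 ^ k * (ahat * p ^ d) := by
        rw [hg]; ring
      rw [heq]
      exact add_mem hk (mul_mem (pow_mem X2_mem k) hgmem_aux)

lemma ker_sub (D : Derivation ℂ R3 R3)
    (hx : D (X 0) = X 1) (hy : D (X 1) = X 2) (hz : D (X 2) = 0)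
    {f : R3} (hDf : D f = 0) : f ∈ A3 := by
  obtain ⟨k, hk⟩ := main_ind D hx hy hz (E f).natDegree f rfl hDf
  exact cancel_z_pow k hk

lemma indep : AlgebraicIndependent ℂ ![(X 2 : R3), p] := by
  set ρ : R3 →ₐ[ℂ] R2 := aeval ![0, X 1, X 0] with hρ
  apply AlgebraicIndependent.of_comp ρ
  have h1 : AlgebraicIndependent ℂ
      (fun i : Fin 2 => Polynomial.aeval (X i : R2) (![Polynomial.X, f0] i)) := by
    apply MvPolynomial.algebraicIndependent_polynomial_aeval_X
    intro i
    fin_cases i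
    · exact Polynomial.transcendental_X ℂ
    · exact f0_trans
  have h2 : ⇑ρ ∘ ![(X 2 : R3), p] =
      fun i : Fin 2 => Polynomial.aeval (X i : R2) (![Polynomial.X, f0] i) := by
    funext i
    fin_cases i
    · show ρ (X 2) = Polynomial.aeval (X 0 : R2) Polynomial.X
      simp [hρ]
    · show ρ p = Polynomial.aeval (X 1 : R2) f0
      simp [hρ, p, f0, MvPolynomial.algebraMap_eq]
  rw [h2]
  exact h1

end Stmt2

/-- ker D = ℂ[z, p], and z, p are algebraically independent over ℂ. -/
theorem stmt_2 (D : Derivation ℂ R3 R3)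
    (hx : D (X 0) = X 1) (hy : D (X 1) = X 2) (hz : D (X 2) = 0) :
    (∀ f : R3, D f = 0 ↔ f ∈ Algebra.adjoin ℂ ({X 2, p} : Set R3)) ∧
    AlgebraicIndependent ℂ ![(X 2 : R3), p] := by
  constructor
  · intro f
    exact ⟨fun h => Stmt2.ker_sub D hx hy hz h, fun h => Stmt2.D_zero_of_mem D hx hy hz h⟩
  · exact Stmt2.indep
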